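/- Let d ≥ 2 and ζ a primitive d-th root of unity. The matrix S indexed by pairs (l,p), 1 ≤ l < d, p ∈ ℤ/dℤ, with entries S_{(l,p),(l',p')} = (ζ/(1−ζ))ζ^{−ll'−lp'−pl'−2pp'}(1−ζ^{ll'}), satisfies S_{(l,p),(l',p')} = −S_{(d−l, l+p),(l',p')} for all entries; consequently rank(S) ≤ d(d−1)/2. -/

import Mathlib

lemma smatrix_aux {K ι : Type*} [Field K] [Fintype ι] [DecidableEq ι]
    (A : Matrix ι ι K) (σ : ι → ι) (hσinv : ∀ x, σ (σ x) = x)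
    (P : ι → Prop) [DecidablePred P]
    (hrow : ∀ x, A x = -(A (σ x)))
    (hPs : ∀ x, ¬ P x → P (σ x))
    (hmaps : ∀ x, P x → ¬ P (σ x)) :
    2 * A.rank ≤ Fintype.card ι := by
  classical
  let T : Finset ι := Finset.univ.filter P
  have hrank : A.rank ≤ T.card := by
    rw [Matrix.rank_eq_finrank_span_row]
    have hsub : Submodule.span K (Set.range A)
        ≤ Submodule.span K ((T.image A : Finset _) : Set (ι → K)) := by
      rw [Submodule.span_le]
      rintro _ ⟨x, rfl⟩
      by_cases hx : P x
      · exact Submodule.subset_span (Finset.mem_coe.mpr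
          (Finset.mem_image_of_mem A (Finset.mem_filter.mpr ⟨Finset.mem_univ _, hx⟩)))
      · rw [hrow x]
        exact neg_mem (Submodule.subset_span (Finset.mem_coe.mpr
          (Finset.mem_image_of_mem A (Finset.mem_filter.mpr ⟨Finset.mem_univ _, hPs x hx⟩))))
    have h1 : Module.finrank K (Submodule.span K (Set.range A))
        ≤ Module.finrank K (Submodule.span K ((T.image A : Finset _) : Set (ι → K))) :=
      Submodule.finrank_mono hsub
    have h2 : Module.finrank K (Submodule.span K ((T.image A : Finset _) : Set (ι → K)))
        ≤ (T.image A).card := finrank_span_finset_le_card _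
    have h3 : (T.image A).card ≤ T.card := Finset.card_image_le
    have h0 : Module.finrank K (Submodule.span K (Set.range A.row))
        = Module.finrank K (Submodule.span K (Set.range A)) := rfl
    omega
  have hinj : Set.InjOn σ ↑T := fun a _ b _ hab => by
    rw [← hσinv a, hab, hσinv]
  have hmapsT : ∀ x ∈ T, σ x ∈ Tᶜ := by
    intro x hxT
    simp only [T, Finset.mem_filter, Finset.mem_univ, true_and] at hxT
    simp only [Finset.mem_compl, T, Finset.mem_filter, Finset.mem_univ, true_and]
    exact hmaps x hxT
  have hcard : T.card ≤ Tᶜ.card := Finset.card_le_card_of_injOn σ hmapsT hinj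
  have htot : T.card + Tᶜ.card = Fintype.card ι := Finset.card_add_card_compl T
  omega


/-- For `ζ` a primitive `d`-th root of unity, the `S`-matrix
`S_{(l,p),(l',p')} = (ζ/(1-ζ)) ζ^{-ll'-lp'-pl'-2pp'} (1-ζ^{ll'})` of the semisimplified double
of the Taft algebra satisfies `S_{(l,p),(l',p')} = -S_{(d-l,l+p),(l',p')}`; consequently its
rank is at most `d(d-1)/2`. -/
theorem smatrix_row_negation (d : ℕ) [NeZero d] (hd : 2 ≤ d)
    (ζ : ℂ) (hζ : IsPrimitiveRoot ζ d)
    (f : ℤ → ℤ → ℤ → ℤ → ℂ)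
    (hf : ∀ l p l' p' : ℤ, f l p l' p' =
      (ζ / (1 - ζ)) * ζ ^ (-(l * l') - l * p' - p * l' - 2 * p * p') * (1 - ζ ^ (l * l'))) :
    (∀ l p l' p' : ℤ, 1 ≤ l → l < d → f l p l' p' = -f ((d : ℤ) - l) (l + p) l' p') ∧
    (Matrix.of (fun (i j : Fin (d - 1) × ZMod d) =>
        f (((i.1 : ℕ) : ℤ) + 1) ((i.2.val : ℤ)) (((j.1 : ℕ) : ℤ) + 1) ((j.2.val : ℤ)))).rank
      ≤ d * (d - 1) / 2 := by
  classical
  have hne : ζ ≠ 0 := hζ.ne_zero (NeZero.ne d)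
  have hone : ζ ^ (d : ℤ) = 1 := by rw [zpow_natCast, hζ.pow_eq_one]
  have hperiod : ∀ b c : ℤ, ζ ^ (b + (d : ℤ) * c) = ζ ^ b := by
    intro b c
    rw [zpow_add₀ hne, zpow_mul, hone, one_zpow, mul_one]
  have part1 : ∀ l p l' p' : ℤ, 1 ≤ l → l < d → f l p l' p' = -f ((d : ℤ) - l) (l + p) l' p' := by
    intro l p l' p' h1 h2
    rw [hf, hf]
    have e1 : ζ ^ (-(((d : ℤ) - l) * l') - ((d : ℤ) - l) * p' - (l + p) * l' - 2 * (l + p) * p')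
        = ζ ^ (l * l' + (-(l * l') - l * p' - p * l' - 2 * p * p')) := by
      rw [show (-(((d : ℤ) - l) * l') - ((d : ℤ) - l) * p' - (l + p) * l' - 2 * (l + p) * p')
        = (l * l' + (-(l * l') - l * p' - p * l' - 2 * p * p')) + (d : ℤ) * (-(l' + p')) by ring,
        hperiod]
    have e2 : ζ ^ (((d : ℤ) - l) * l') = ζ ^ (-(l * l')) := by
      rw [show ((d : ℤ) - l) * l' = -(l * l') + (d : ℤ) * l' by ring, hperiod]
    rw [e1, e2, zpow_add₀ hne]
    have h3 : ζ ^ (l * l') * ζ ^ (-(l * l')) = 1 := by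
      rw [← zpow_add₀ hne]; simp
    linear_combination (-(ζ / (1 - ζ) * ζ ^ (-(l * l') - l * p' - p * l' - 2 * p * p'))) * h3
  refine ⟨part1, ?_⟩
  -- f depends on its second argument only modulo d
  have hfp : ∀ (l p q l' p' : ℤ), (d : ℤ) ∣ (p - q) → f l p l' p' = f l q l' p' := by
    rintro l p q l' p' ⟨k, hk⟩
    rw [hf, hf]
    congr 2
    rw [show (-(l * l') - l * p' - p * l' - 2 * p * p')
        = (-(l * l') - l * p' - q * l' - 2 * q * p') + (d : ℤ) * (-(k * l') - 2 * (k * p')) by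
      have hp : p = q + (d : ℤ) * k := by linarith
      rw [hp]; ring, hperiod]
  set A : Matrix (Fin (d - 1) × ZMod d) (Fin (d - 1) × ZMod d) ℂ :=
    Matrix.of (fun (i j : Fin (d - 1) × ZMod d) =>
        f (((i.1 : ℕ) : ℤ) + 1) ((i.2.val : ℤ)) (((j.1 : ℕ) : ℤ) + 1) ((j.2.val : ℤ))) with hA
  have hlt : ∀ i : Fin (d - 1), i.val < d - 1 := fun i => i.isLt
  let σ : Fin (d - 1) × ZMod d → Fin (d - 1) × ZMod d :=
    fun x => (⟨d - 2 - x.1.val, by have := hlt x.1; omega⟩, x.2 + ((x.1.val + 1 : ℕ) : ZMod d))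
  have hval : ∀ x : Fin (d - 1) × ZMod d,
      (σ x).2.val = (x.2.val + (x.1.val + 1)) % d := by
    intro x
    have h1 : x.1.val + 1 < d := by have := hlt x.1; omega
    show (x.2 + ((x.1.val + 1 : ℕ) : ZMod d)).val = _
    rw [ZMod.val_add, ZMod.val_natCast, Nat.mod_eq_of_lt h1]
  -- row relation
  have hrow : ∀ x, A x = -(A (σ x)) := by
    intro x
    funext j
    have h1 : (1 : ℤ) ≤ ((x.1.val : ℤ) + 1) := by omega
    have h2 : ((x.1.val : ℤ) + 1) < (d : ℤ) := by have := hlt x.1; omega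
    have h := part1 ((x.1.val : ℤ) + 1) ((x.2.val : ℤ)) ((j.1.val : ℤ) + 1) ((j.2.val : ℤ)) h1 h2
    show f _ _ _ _ = -(A (σ x) j)
    rw [h]
    have hdvd : (d : ℤ) ∣ ((((x.1.val : ℤ) + 1) + (x.2.val : ℤ)) - (((σ x).2.val : ℤ))) := by
      apply (ZMod.intCast_zmod_eq_zero_iff_dvd _ d).mp
      push_cast
      simp only [ZMod.natCast_val, ZMod.cast_id]
      have hσ2 : (σ x).2 = x.2 + ((x.1.val : ZMod d) + 1) := by simp only [σ]; push_cast; ring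
      rw [hσ2]
      ring
    have harg : ((d : ℤ) - ((x.1.val : ℤ) + 1)) = (((d - 2 - x.1.val : ℕ) : ℤ) + 1) := by
      have := hlt x.1; omega
    show -f _ _ _ _ = -(f ((((d - 2 - x.1.val : ℕ)) : ℤ) + 1) (((σ x).2.val : ℤ)) _ _)
    rw [harg]
    exact congrArg Neg.neg (hfp _ _ _ _ _ hdvd)
  -- the half-index set
  let P : Fin (d - 1) × ZMod d → Prop :=
    fun x => 2 * (x.1.val + 1) < d ∨ (2 * (x.1.val + 1) = d ∧ x.2.val < d / 2)
  have hPdec : DecidablePred P := fun x => by unfold P; infer_instance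
  let T : Finset (Fin (d - 1) × ZMod d) := Finset.univ.filter P
  have hPs : ∀ x, ¬ P x → P (σ x) := by
    intro x hx
    have hge : d ≤ 2 * (x.1.val + 1) := by
      by_contra h; exact hx (Or.inl (by omega))
    have himp : 2 * (x.1.val + 1) = d → d / 2 ≤ x.2.val := by
      intro h; by_contra h2; exact hx (Or.inr ⟨h, by omega⟩)
    by_cases hcase : 2 * (x.1.val + 1) = d
    · right
      have hpv : d / 2 ≤ x.2.val := himp hcase
      have hv2 : x.2.val < d := ZMod.val_lt x.2
      constructor
      · show 2 * ((d - 2 - x.1.val) + 1) = d; omega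
      · rw [hval x]
        have hle : d ≤ x.2.val + (x.1.val + 1) := by omega
        have hlt2 : x.2.val + (x.1.val + 1) - d < d := by omega
        rw [Nat.mod_eq_sub_mod hle, Nat.mod_eq_of_lt hlt2]
        omega
    · left
      show 2 * ((d - 2 - x.1.val) + 1) < d
      have := hlt x.1; omega
  have hmaps : ∀ x, P x → ¬ P (σ x) := by
    intro x hx
    have hσ1 : (σ x).1.val = d - 2 - x.1.val := rfl
    rintro (hc | ⟨hc1, hc2⟩)
    · rw [hσ1] at hc
      rcases hx with hlt1 | ⟨heq, hpv⟩
      · omega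
      · have := hlt x.1; omega
    · rw [hσ1] at hc1
      rcases hx with hlt1 | ⟨heq, hpv⟩
      · omega
      · rw [hval x] at hc2
        have hlt2 : x.2.val + (x.1.val + 1) < d := by omega
        rw [Nat.mod_eq_of_lt hlt2] at hc2
        omega
  have hσinv : ∀ x, σ (σ x) = x := by
    intro x
    have hi := hlt x.1
    refine Prod.ext ?_ ?_
    · apply Fin.ext
      show d - 2 - (d - 2 - x.1.val) = x.1.val
      omega
    · show (x.2 + ((x.1.val + 1 : ℕ) : ZMod d)) + (((d - 2 - x.1.val) + 1 : ℕ) : ZMod d) = x.2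
      rw [add_assoc, ← Nat.cast_add, show (x.1.val + 1) + ((d - 2 - x.1.val) + 1) = d by omega,
        ZMod.natCast_self, add_zero]
  have key := smatrix_aux A σ hσinv P hrow hPs hmaps
  have hcardι : Fintype.card (Fin (d - 1) × ZMod d) = (d - 1) * d := by
    simp [ZMod.card]
  rw [hcardι] at key
  obtain ⟨N, hN⟩ : ∃ N, d * (d - 1) = N := ⟨_, rfl⟩
  have hN' : (d - 1) * d = N := by rw [← hN]; ring
  rw [hN]
  omega
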